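/- If a subset X ⊆ T is dominant with respect to a nonempty subset C ⊆ I, then the cardinality of X is at most the cardinality of C. -/
import Mathlib


/-- `X ⊆ T` is dominant with respect to `C ⊆ I` (for the family of linear orders `o`)
if either `X = ∅`, or `X ≠ ∅` and there is no `y : T` with `min_i X <_i y` for all `i ∈ C`. -/
def Dominant {T I : Type*} (o : I → LinearOrder T) (X : Finset T) (C : Finset I) : Prop :=
  ∀ hX : X.Nonempty, ¬ ∃ y : T, ∀ i ∈ C, (o i).lt (@Finset.min' T (o i) X hX) y

/-- If `X ⊆ T` is dominant with respect to a nonempty `C ⊆ I`, then `|X| ≤ |C|`. -/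
theorem stmt2 {T I : Type*} [Fintype T] [Fintype I] [Nonempty T] [Nonempty I]
    [DecidableEq T] [DecidableEq I] (o : I → LinearOrder T)
    (X : Finset T) (C : Finset I) (hC : C.Nonempty)
    (hdom : Dominant o X C) :
    X.card ≤ C.card := by
  rcases X.eq_empty_or_nonempty with h | hX
  · simp [h]
  · have key : X ⊆ C.image (fun i => @Finset.min' T (o i) X hX) := by
      intro x hx
      by_contra hnot
      apply hdom hX
      refine ⟨x, fun i hi => ?_⟩
      have hne : @Finset.min' T (o i) X hX ≠ x := fun heq =>
        hnot (Finset.mem_image.mpr ⟨i, hi, heq⟩)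
      have hle : (o i).le (@Finset.min' T (o i) X hX) x :=
        @Finset.min'_le T (o i) X x hx
      exact @lt_of_le_of_ne T (o i).toPartialOrder _ _ hle hne
    calc X.card ≤ (C.image (fun i => @Finset.min' T (o i) X hX)).card :=
          Finset.card_le_card key
      _ ≤ C.card := Finset.card_image_le
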